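/- Let E = V_1 ⊕ V_2 ⊕ … ⊕ V_q be a finite-dimensional complex vector space written as a direct sum of nonzero subspaces, let w_1 < w_2 < … < w_q be integers, and for θ ∈ ℝ let ρ(e^{iθ}) ∈ GL(E) act as multiplication by e^{i w_j θ} on V_j. Then: (i) a Hermitian inner product H on E satisfies H(ρ(e^{iθ})x, ρ(e^{iθ})y) = H(x,y) for all θ, x, y if and only if the subspaces V_1,…,V_q are pairwise H-orthogonal; and (ii) for every Hermitian inner product H on E there exists an invertible linear map α : E → E preserving the flag V_1 ⊂ V_1⊕V_2 ⊂ … ⊂ V_1⊕…⊕V_q = E such that the pulled-back inner product (x,y) ↦ H(αx, αy) makes V_1,…,V_q pairwise orthogonal, i.e. is invariant under every ρ(e^{iθ}). -/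

import Mathlib

set_option maxHeartbeats 1000000 in
/-- For `E = V₁ ⊕ ⋯ ⊕ V_q` (nonzero subspaces) with strictly increasing
integer weights and `ρ(e^{iθ})` acting as `e^{i wⱼ θ}` on `Vⱼ`:
(i) a Hermitian inner product `H` is invariant under every `ρ(e^{iθ})` iff the `Vⱼ`
are pairwise `H`-orthogonal; (ii) for every Hermitian inner product `H` there is an
invertible linear map `α` preserving the flag `V₁ ⊂ V₁⊕V₂ ⊂ ⋯ ⊂ E` such that the
pulled-back product `(x,y) ↦ H(αx, αy)` makes the `Vⱼ` pairwise orthogonal, i.e. is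
invariant under every `ρ(e^{iθ})`. -/
theorem statement6 (q : ℕ) (E : Type*) [AddCommGroup E] [Module ℂ E]
    [FiniteDimensional ℂ E]
    (V : Fin q → Submodule ℂ E) (hV : DirectSum.IsInternal V) (hVne : ∀ i, V i ≠ ⊥)
    (w : Fin q → ℤ) (hw : StrictMono w)
    (H : E →ₗ⋆[ℂ] E →ₗ[ℂ] ℂ)
    (Hsymm : ∀ x y : E, H y x = starRingEnd ℂ (H x y))
    (Hpos : ∀ x : E, x ≠ 0 → 0 < (H x x).re)
    (ρ : ℝ → E →ₗ[ℂ] E)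
    (hρ : ∀ θ : ℝ, ∀ j : Fin q, ∀ v ∈ V j,
      ρ θ v = Complex.exp (Complex.I * (w j : ℂ) * (θ : ℂ)) • v) :
    ((∀ (θ : ℝ) (x y : E), H (ρ θ x) (ρ θ y) = H x y) ↔
      (∀ i j : Fin q, i ≠ j → ∀ x ∈ V i, ∀ y ∈ V j, H x y = 0)) ∧
    (∃ α : E →ₗ[ℂ] E, Function.Bijective α ∧
      (∀ k : Fin q, ∀ v ∈ (⨆ i ≤ k, V i), α v ∈ (⨆ i ≤ k, V i)) ∧
      (∀ i j : Fin q, i ≠ j → ∀ x ∈ V i, ∀ y ∈ V j, H (α x) (α y) = 0)) := by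
  classical
  have hkey : ∀ (θ : ℝ) (i j : Fin q) (x y : E), x ∈ V i → y ∈ V j →
      H (ρ θ x) (ρ θ y)
        = Complex.exp (Complex.I * ((w j : ℂ) - (w i : ℂ)) * (θ : ℂ)) * H x y := by
    intro θ i j x y hx hy
    rw [hρ θ i x hx, hρ θ j y hy]
    simp only [map_smulₛₗ, LinearMap.smul_apply, map_smul, smul_eq_mul]
    have h1 : (starRingEnd ℂ) (Complex.exp (Complex.I * (w i : ℂ) * (θ : ℂ)))
        = Complex.exp (-(Complex.I * (w i : ℂ) * (θ : ℂ))) := by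
      rw [← Complex.exp_conj]
      congr 1
      simp only [map_mul, Complex.conj_I, map_intCast, Complex.conj_ofReal]
      ring
    rw [h1]
    simp only [RingHom.id_apply]
    rw [← mul_assoc, ← Complex.exp_add]
    congr 2
    ring
  constructor
  · constructor
    · intro hinv i j hij x hx y hy
      have hwne : w i ≠ w j := fun h => hij (hw.injective h)
      have hdR : ((w j : ℝ) - (w i : ℝ)) ≠ 0 := by
        rw [sub_ne_zero]
        exact_mod_cast (Ne.symm hwne)
      set θ : ℝ := Real.pi / ((w j : ℝ) - (w i : ℝ)) with hθ
      have h := hkey θ i j x y hx hy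
      rw [hinv θ x y] at h
      have hdC : ((w j : ℂ) - (w i : ℂ)) ≠ 0 := by exact_mod_cast hdR
      have harg : Complex.I * ((w j : ℂ) - (w i : ℂ)) * (θ : ℂ)
          = Real.pi * Complex.I := by
        rw [hθ]
        push_cast
        field_simp
      rw [harg, Complex.exp_pi_mul_I, neg_one_mul] at h
      linear_combination h / 2
    · intro horth θ x y
      set B : E →ₗ⋆[ℂ] E →ₗ[ℂ] ℂ := (H.comp (ρ θ)).compl₂ (ρ θ) with hBdef
      have hBapp : ∀ u v : E, B u v = H (ρ θ u) (ρ θ v) := fun u v => rfl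
      have htop : (⊤ : Submodule ℂ E) ≤ LinearMap.ker (B - H) := by
        rw [← hV.submodule_iSup_eq_top]
        refine iSup_le fun i u hu => ?_
        simp only [LinearMap.mem_ker, LinearMap.sub_apply, sub_eq_zero]
        have h2 : (⊤ : Submodule ℂ E) ≤ LinearMap.ker (B u - H u) := by
          rw [← hV.submodule_iSup_eq_top]
          refine iSup_le fun j v hv => ?_
          simp only [LinearMap.mem_ker, LinearMap.sub_apply, sub_eq_zero]
          rw [hBapp, hkey θ i j u v hu hv]
          rcases eq_or_ne i j with rfl | hij
          · simp
          · rw [horth i j hij u hu v hv, mul_zero]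
        refine LinearMap.ext fun z => ?_
        have := h2 (Submodule.mem_top (x := z))
        rw [LinearMap.mem_ker, LinearMap.sub_apply, sub_eq_zero] at this
        exact this
      have := htop (Submodule.mem_top (x := x))
      rw [LinearMap.mem_ker, LinearMap.sub_apply, sub_eq_zero] at this
      calc H (ρ θ x) (ρ θ y) = B x y := (hBapp x y).symm
        _ = H x y := DFunLike.congr_fun this y
  · -- part (ii)
    let c : InnerProductSpace.Core ℂ E :=
      { inner := fun x y => H x y
        conj_inner_symm := fun x y => by
          change (starRingEnd ℂ) (H y x) = H x y
          rw [Hsymm x y, Complex.conj_conj]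
        re_inner_nonneg := fun x => by
          rcases eq_or_ne x 0 with rfl | hx
          · change (0:ℝ) ≤ (H 0 0).re
            simp
          · exact le_of_lt (Hpos x hx)
        add_left := fun x y z => by
          change H (x + y) z = H x z + H y z
          rw [map_add, LinearMap.add_apply]
        smul_left := fun x y r => by
          change H (r • x) y = (starRingEnd ℂ) r * H x y
          rw [map_smulₛₗ, LinearMap.smul_apply, smul_eq_mul]
        definite := fun x hx => by
          by_contra hne
          have h1 := Hpos x hne
          rw [show H x x = (0:ℂ) from hx] at h1
          simp at h1 }
    letI : NormedAddCommGroup E := c.toNormedAddCommGroup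
    letI : InnerProductSpace ℂ E := InnerProductSpace.ofCore c.toCore
    letI : DirectSum.Decomposition V := hV.chooseDecomposition
    set U : Fin q → Submodule ℂ E := fun j => ⨆ i, ⨆ _ : i < j, V i with hU
    have hVU : ∀ i j : Fin q, i < j → V i ≤ U j := fun i j hij =>
      le_iSup₂ (f := fun i (_ : i < j) => V i) i hij
    have hUU : ∀ i j : Fin q, i ≤ j → U i ≤ U j := fun i j hij =>
      iSup₂_le fun l hl => hVU l j (lt_of_lt_of_le hl hij)
    let β : ∀ j : Fin q, V j →ₗ[ℂ] E := fun j =>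
      (V j).subtype - ((U j).subtype ∘ₗ (Submodule.orthogonalProjectionOnto (U j)).toLinearMap ∘ₗ (V j).subtype)
    let α : E →ₗ[ℂ] E :=
      (DirectSum.toModule ℂ (Fin q) E β) ∘ₗ (DirectSum.decomposeLinearEquiv V).toLinearMap
    have hα : ∀ (j : Fin q) (x : E) (hx : x ∈ V j),
        α x = x - (Submodule.orthogonalProjectionOnto (U j) x : E) := by
      intro j x hx
      have h1 : DirectSum.decompose V x = DirectSum.lof ℂ (Fin q) (fun i => V i) j ⟨x, hx⟩ := by
        rw [DirectSum.lof_eq_of]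
        exact DirectSum.decompose_coe V (⟨x, hx⟩ : V j)
      change DirectSum.toModule ℂ (Fin q) E β (DirectSum.decompose V x) = _
      rw [h1, DirectSum.toModule_lof]
      rfl
    have hβgen : ∀ (j : Fin q) (x : V j),
        β j x = (x : E) - (Submodule.orthogonalProjectionOnto (U j) (x : E) : E) := fun j x => rfl
    have hsum : ∀ v : E, v = ∑ j : Fin q, ((DirectSum.decompose V v j : E)) := by
      intro v
      conv_lhs => rw [← DirectSum.sum_support_decompose V v]
      refine Finset.sum_subset (Finset.subset_univ _) fun j _ hj => ?_
      rw [DFinsupp.notMem_support_iff.mp hj, ZeroMemClass.coe_zero]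
    have hαsum : ∀ v : E, α v = ∑ j : Fin q, β j (DirectSum.decompose V v j) := by
      intro v
      change DirectSum.toModule ℂ (Fin q) E β (DirectSum.decompose V v) = _
      conv_lhs => rw [← DirectSum.sum_univ_of (DirectSum.decompose V v)]
      rw [map_sum]
      exact Finset.sum_congr rfl fun j _ => by
        rw [← DirectSum.lof_eq_of ℂ, DirectSum.toModule_lof]
    clear_value α β
    have hdisj : ∀ m : Fin q, ∀ x : E, x ∈ V m → x ∈ U m → x = 0 := by
      intro m x h1 h2
      have hle : U m ≤ ⨆ j, ⨆ _ : j ≠ m, V j :=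
        iSup₂_le fun i hi => le_iSup₂ (f := fun j (_ : j ≠ m) => V j) i (ne_of_lt hi)
      exact (Submodule.disjoint_def.mp
        ((hV.submodule_iSupIndep m).mono_right hle)) x h1 h2
    have hinj : Function.Injective α := by
      refine (injective_iff_map_eq_zero α).mpr fun v hv0 => ?_
      by_contra hvne
      set dv : Fin q → E := fun j => (DirectSum.decompose V v j : E) with hdv
      have hdvmem : ∀ j, dv j ∈ V j := fun j => (DirectSum.decompose V v j).2
      set S : Finset (Fin q) := Finset.univ.filter (fun j => dv j ≠ 0) with hS
      have hSne : S.Nonempty := by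
        by_contra hSe
        rw [Finset.not_nonempty_iff_eq_empty] at hSe
        apply hvne
        rw [hsum v]
        refine Finset.sum_eq_zero fun j _ => ?_
        by_contra hj
        have hjS : j ∈ S := by
          rw [hS, Finset.mem_filter]
          exact ⟨Finset.mem_univ j, hj⟩
        rw [hSe] at hjS
        exact absurd hjS (Finset.notMem_empty j)
      set m := S.max' hSne with hm
      have hm_mem : m ∈ S := S.max'_mem hSne
      have hdm : dv m ≠ 0 := by
        rw [hS, Finset.mem_filter] at hm_mem
        exact hm_mem.2
      have hβ : ∀ j, β j (DirectSum.decompose V v j)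
          = dv j - (Submodule.orthogonalProjectionOnto (U j) (dv j) : E) := fun j => hβgen j _
      have hzero : ∑ j : Fin q, β j (DirectSum.decompose V v j) = 0 := by
        rw [← hαsum v, hv0]
      have h4 : dv m = (Submodule.orthogonalProjectionOnto (U m) (dv m) : E)
          - ∑ j ∈ Finset.univ.erase m, β j (DirectSum.decompose V v j) := by
        rw [← Finset.add_sum_erase _ _ (Finset.mem_univ m), hβ m] at hzero
        have h6 := eq_neg_of_add_eq_zero_left hzero
        rw [sub_eq_iff_eq_add] at h6
        conv_lhs => rw [h6]
        rw [neg_add_eq_sub]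
      have hmember : dv m ∈ U m := by
        rw [h4]
        refine sub_mem (Submodule.orthogonalProjectionOnto (U m) (dv m)).2 (Submodule.sum_mem _ ?_)
        intro j hj
        have hjm : j ≠ m := Finset.ne_of_mem_erase hj
        by_cases hjS : j ∈ S
        · have hjlt : j < m := lt_of_le_of_ne (S.le_max' j hjS) hjm
          rw [hβ j]
          exact sub_mem (hVU j m hjlt (hdvmem j))
            (hUU j m (le_of_lt hjlt) (Submodule.orthogonalProjectionOnto (U j) (dv j)).2)
        · have hdj : dv j = 0 := by
            rw [hS, Finset.mem_filter] at hjS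
            push_neg at hjS
            exact hjS (Finset.mem_univ j)
          have hdj' : DirectSum.decompose V v j = 0 := Subtype.ext hdj
          rw [hdj', map_zero]
          exact Submodule.zero_mem _
      exact hdm (hdisj m (dv m) (hdvmem m) hmember)
    have hWle : ∀ (k : Fin q) (i : Fin q), i ≤ k → V i ≤ ⨆ i, ⨆ _ : i ≤ k, V i :=
      fun k i hik => le_iSup₂ (f := fun i (_ : i ≤ k) => V i) i hik
    have hflag : ∀ k : Fin q, ∀ v ∈ (⨆ i, ⨆ _ : i ≤ k, V i),
        α v ∈ (⨆ i, ⨆ _ : i ≤ k, V i) := by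
      intro k v hv
      have hle : (⨆ i, ⨆ _ : i ≤ k, V i)
          ≤ Submodule.comap α (⨆ i, ⨆ _ : i ≤ k, V i) := by
        refine iSup₂_le fun i hik x hx => Submodule.mem_comap.mpr ?_
        rw [hα i x hx]
        refine sub_mem (hWle k i hik hx) ?_
        have hUW : U i ≤ ⨆ i, ⨆ _ : i ≤ k, V i :=
          iSup₂_le fun l hl => hWle k l (le_of_lt (lt_of_lt_of_le hl hik))
        exact hUW (Submodule.orthogonalProjectionOnto (U i) x).2
      exact hle hv
    have horthlt : ∀ i j : Fin q, i < j → ∀ x ∈ V i, ∀ y ∈ V j,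
        H (α x) (α y) = 0 := by
      intro i j hij x hx y hy
      have hax : α x ∈ U j := by
        rw [hα i x hx]
        exact sub_mem (hVU i j hij hx)
          (hUU i j (le_of_lt hij) (Submodule.orthogonalProjectionOnto (U i) x).2)
      rw [hα j y hy]
      exact (Submodule.mem_orthogonal (U j) _).mp
        (Submodule.sub_starProjection_mem_orthogonal (K := U j) y) (α x) hax
    refine ⟨α, ⟨hinj, LinearMap.injective_iff_surjective.mp hinj⟩, hflag, ?_⟩
    intro i j hij x hx y hy
    rcases lt_or_gt_of_ne hij with h | h
    · exact horthlt i j h x hx y hy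
    · rw [Hsymm (α y) (α x), horthlt j i h y hy x hx, map_zero]
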